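/- arXiv:2101.08187 — 2 statements merged into one kernel-verified Lean document; each statement's English description precedes it below -/
import Mathlib

section
/- Let (R, m) be a commutative Noetherian local ring and let 0 → M₁ → M → M₂ → 0 be a short exact sequence of finitely generated R-modules such that M ≅ M₁ ⊕ M₂ as R-modules. Then the sequence splits. -/
open Submodule

section Flen
variable {R : Type*} [Ring R]

open Classical in
/-- Length of a module, via composition series. -/
noncomputable def flen (R : Type*) [Ring R] (M : Type*) [AddCommGroup M] [Module R M] : ℕ :=
  if h : ∃ s : CompositionSeries (Submodule R M), s.head = ⊥ ∧ s.last = ⊤ then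
    h.choose.length else 0

variable {M N : Type*} [AddCommGroup M] [Module R M] [AddCommGroup N] [Module R N]

lemma flen_eq (s : CompositionSeries (Submodule R M)) (h1 : s.head = ⊥) (h2 : s.last = ⊤) :
    flen R M = s.length := by
  have h : ∃ s : CompositionSeries (Submodule R M), s.head = ⊥ ∧ s.last = ⊤ := ⟨s, h1, h2⟩
  unfold flen
  rw [dif_pos h]
  exact (CompositionSeries.jordan_holder h.choose s (h.choose_spec.1.trans h1.symm)
    (h.choose_spec.2.trans h2.symm)).length_eq

lemma flen_congr (e : M ≃ₗ[R] N) [IsNoetherian R M] [IsArtinian R M] : flen R M = flen R N := by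
  obtain ⟨s, h1, h2⟩ := exists_compositionSeries_of_isNoetherian_isArtinian R M
  let F : Submodule R M ≃o Submodule R N := Submodule.orderIsoMapComap e
  let t : CompositionSeries (Submodule R N) :=
    s.map ⟨fun p => F p, fun {a b} (h : a ⋖ b) => (apply_covBy_apply_iff F).2 h⟩
  have ht1 : t.head = ⊥ := by
    show F s.head = ⊥
    rw [h1]; exact OrderIso.map_bot F
  have ht2 : t.last = ⊤ := by
    show F s.last = ⊤
    rw [h2]; exact OrderIso.map_top F
  rw [flen_eq s h1 h2, flen_eq t ht1 ht2]
  rfl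



lemma covBy_map_subtype (P : Submodule R M) {a b : Submodule R P} (h : a ⋖ b) :
    a.map P.subtype ⋖ b.map P.subtype := by
  have hrange : Set.range (Submodule.MapSubtype.orderEmbedding P) = Set.Iic P := by
    ext q
    constructor
    · rintro ⟨q', rfl⟩
      rw [Submodule.map_subtype_embedding_eq]
      exact (Submodule.map_subtype_le P q')
    · intro hq
      exact ⟨comap P.subtype q, by
        rw [Submodule.map_subtype_embedding_eq, Submodule.map_comap_subtype,
          inf_eq_right.2 hq]⟩
  have h2 := ((Set.OrdConnected.apply_covBy_apply_iff
    (Submodule.MapSubtype.orderEmbedding P) (hrange ▸ Set.ordConnected_Iic)).2 h)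
  simpa only [Submodule.map_subtype_embedding_eq] using h2

lemma covBy_comap_mkQ (P : Submodule R M) {a b : Submodule R (M ⧸ P)} (h : a ⋖ b) :
    a.comap P.mkQ ⋖ b.comap P.mkQ := by
  have hrange : Set.range (Submodule.comapMkQOrderEmbedding P) = Set.Ici P := by
    ext q
    constructor
    · rintro ⟨q', rfl⟩
      rw [Submodule.comapMkQOrderEmbedding_eq]
      exact (Submodule.le_comap_mkQ P q')
    · intro hq
      exact ⟨map P.mkQ q, by
        rw [Submodule.comapMkQOrderEmbedding_eq, Submodule.comap_map_mkQ, sup_eq_right.2 hq]⟩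
  have h2 := ((Set.OrdConnected.apply_covBy_apply_iff
    (Submodule.comapMkQOrderEmbedding P) (hrange ▸ Set.ordConnected_Ici)).2 h)
  simpa only [Submodule.comapMkQOrderEmbedding_eq] using h2



lemma flen_additive (P : Submodule R M) [IsNoetherian R M] [IsArtinian R M] :
    flen R M = flen R P + flen R (M ⧸ P) := by
  obtain ⟨s₁, h11, h12⟩ := exists_compositionSeries_of_isNoetherian_isArtinian R P
  obtain ⟨s₂, h21, h22⟩ := exists_compositionSeries_of_isNoetherian_isArtinian R (M ⧸ P)
  let t₁ : CompositionSeries (Submodule R M) :=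
    s₁.map ⟨fun q => q.map P.subtype, fun {a b} h => covBy_map_subtype P h⟩
  let t₂ : CompositionSeries (Submodule R M) :=
    s₂.map ⟨fun q => q.comap P.mkQ, fun {a b} h => covBy_comap_mkQ P h⟩
  have hconn : t₁.last = t₂.head := by
    show Submodule.map P.subtype s₁.last = Submodule.comap P.mkQ s₂.head
    rw [h12, h21, Submodule.map_top, Submodule.comap_bot, Submodule.range_subtype,
      Submodule.ker_mkQ]
  let t := t₁.smash t₂ hconn
  have h1 : t.head = ⊥ := by
    rw [RelSeries.head_smash]
    show Submodule.map P.subtype s₁.head = ⊥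
    rw [h11, Submodule.map_bot]
  have h2 : t.last = ⊤ := by
    rw [RelSeries.last_smash]
    show Submodule.comap P.mkQ s₂.last = ⊤
    rw [h22, Submodule.comap_top]
  rw [flen_eq t h1 h2, flen_eq s₁ h11 h12, flen_eq s₂ h21 h22]
  rfl


end Flen

section Artin
variable {R : Type*} [CommRing R]

lemma isArtinian_of_smul_top_eq_bot {Z : Type*} [AddCommGroup Z] [Module R Z]
    [Module.Finite R Z] (I : Ideal R) [I.IsMaximal] (h : I • (⊤ : Submodule R Z) = ⊥) :
    IsArtinian R Z := by
  have htor : Module.IsTorsionBySet R Z I := by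
    intro x a
    have : (a : R) • x ∈ I • (⊤ : Submodule R Z) := Submodule.smul_mem_smul a.2 Submodule.mem_top
    rwa [h, Submodule.mem_bot] at this
  letI : Module (R ⧸ I) Z := htor.module
  haveI : IsScalarTower R (R ⧸ I) Z := htor.isScalarTower
  haveI : Module.Finite (R ⧸ I) Z := Module.Finite.of_restrictScalars_finite R (R ⧸ I) Z
  letI : Field (R ⧸ I) := Ideal.Quotient.field I
  haveI : IsArtinian (R ⧸ I) Z := isArtinian_of_fg_of_artinian'
  refine ⟨?_⟩
  have emb : ((· < ·) : Submodule R Z → Submodule R Z → Prop) ↪r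
      ((· < ·) : Submodule (R ⧸ I) Z → Submodule (R ⧸ I) Z → Prop) := by
    refine ⟨⟨fun N =>
      { carrier := N
        add_mem' := fun ha hb => N.add_mem ha hb
        zero_mem' := N.zero_mem
        smul_mem' := fun c z hz => Quotient.inductionOn' c fun r => by
          have : (Quotient.mk'' r : R ⧸ I) • z = r • z := htor.mk_smul r z
          rw [this]
          exact N.smul_mem r hz }, fun a b hab => ?_⟩, ?_⟩
    · ext x
      exact SetLike.ext_iff.1 hab x
    · intro a b
      constructor
      · intro hab
        exact lt_of_le_of_ne (fun x hx => hab.le hx) (fun e => hab.ne (by ext x; exact SetLike.ext_iff.1 e x))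
      · intro hab
        exact lt_of_le_of_ne (fun x hx => hab.le hx) (fun e => hab.ne (by ext x; exact SetLike.ext_iff.1 e x))
  exact emb.wellFounded IsWellFounded.wf

lemma isArtinian_of_pow_smul_top_eq_bot [IsNoetherianRing R] (I : Ideal R) [I.IsMaximal] :
    ∀ (n : ℕ) (Z : Type*) [AddCommGroup Z] [Module R Z] [Module.Finite R Z],
    I ^ n • (⊤ : Submodule R Z) = ⊥ → IsArtinian R Z := by
  intro n
  induction n with
  | zero =>
    intro Z _ _ _ h
    rw [pow_zero, Ideal.one_eq_top, Submodule.top_smul] at h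
    haveI : Subsingleton Z := by
      refine ⟨fun a b => ?_⟩
      have ha : a ∈ (⊥ : Submodule R Z) := h ▸ Submodule.mem_top
      have hb : b ∈ (⊥ : Submodule R Z) := h ▸ Submodule.mem_top
      rw [Submodule.mem_bot] at ha hb
      rw [ha, hb]
    exact isArtinian_of_finite
  | succ n ih =>
    intro Z _ _ _ h
    set Y : Submodule R Z := I • ⊤ with hYdef
    haveI : Module.Finite R Y := ⟨(Submodule.fg_top Y).2 (IsNoetherian.noetherian Y)⟩
    have hY : I ^ n • (⊤ : Submodule R Y) = ⊥ := by
      apply Submodule.map_injective_of_injective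
        (show Function.Injective Y.subtype from Subtype.val_injective)
      rw [Submodule.map_smul'', Submodule.map_top, Submodule.range_subtype, Submodule.map_bot]
      rw [hYdef, ← mul_smul, ← pow_succ] at *
      exact h
    haveI : IsArtinian R Y := ih Y hY
    haveI : Module.Finite R (Z ⧸ Y) := Module.Finite.of_surjective Y.mkQ Y.mkQ_surjective
    haveI : IsArtinian R (Z ⧸ Y) := by
      apply isArtinian_of_smul_top_eq_bot I
      have htop : (⊤ : Submodule R (Z ⧸ Y)) = Submodule.map Y.mkQ ⊤ := by
        rw [Submodule.map_top, Submodule.range_mkQ]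
      rw [htop, ← Submodule.map_smul'']
      rw [show I • (⊤ : Submodule R Z) = Y from rfl]
      rw [← Submodule.ker_mkQ Y, eq_bot_iff]
      rintro x ⟨y, hy, rfl⟩
      simpa using hy
    exact isArtinian_of_range_eq_ker Y.subtype Y.mkQ
      (by rw [Submodule.range_subtype, Submodule.ker_mkQ])

end Artin

section FlenMore
variable {R : Type*} [Ring R] {M N : Type*} [AddCommGroup M] [Module R M]
  [AddCommGroup N] [Module R N]

lemma subsingleton_of_flen_zero [IsNoetherian R M] [IsArtinian R M] (h : flen R M = 0) :
    Subsingleton M := by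
  obtain ⟨s, h1, h2⟩ := exists_compositionSeries_of_isNoetherian_isArtinian R M
  rw [flen_eq s h1 h2] at h
  have hlast : (Fin.last s.length) = (0 : Fin (s.length + 1)) := by
    ext; simp [h.symm]
  have hbt : (⊥ : Submodule R M) = ⊤ := by
    rw [← h1, ← h2]
    show s 0 = s (Fin.last s.length)
    rw [hlast]
  refine ⟨fun a b => ?_⟩
  have ha : a ∈ (⊥ : Submodule R M) := hbt ▸ Submodule.mem_top
  have hb : b ∈ (⊥ : Submodule R M) := hbt ▸ Submodule.mem_top
  rw [Submodule.mem_bot] at ha hb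
  rw [ha, hb]

lemma flen_ker_range (u : M →ₗ[R] N) [IsNoetherian R M] [IsArtinian R M] :
    flen R M = flen R (LinearMap.ker u) + flen R (LinearMap.range u) := by
  rw [flen_additive (LinearMap.ker u)]
  congr 1
  exact flen_congr u.quotKerEquivRange

lemma flen_prod [IsNoetherian R M] [IsArtinian R M] [IsNoetherian R N] [IsArtinian R N] :
    flen R (M × N) = flen R M + flen R N := by
  have e₁ : (LinearMap.ker (LinearMap.snd R M N)) ≃ₗ[R] M :=
    ((LinearEquiv.ofInjective (LinearMap.inl R M N) LinearMap.inl_injective).trans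
      (LinearEquiv.ofEq _ _ (LinearMap.range_inl R M N))).symm
  have e₂ : ((M × N) ⧸ (LinearMap.ker (LinearMap.snd R M N))) ≃ₗ[R] N :=
    LinearMap.quotKerEquivOfSurjective _ (LinearMap.snd_surjective)
  rw [flen_additive (LinearMap.ker (LinearMap.snd R M N)), flen_congr e₁, flen_congr e₂]

lemma eq_top_of_flen_eq (W : Submodule R N) [IsNoetherian R N] [IsArtinian R N]
    (h : flen R W = flen R N) : W = ⊤ := by
  have h2 := flen_additive W
  rw [← h] at h2; have h3 : flen R (N ⧸ W) = 0 := by omega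
  exact Submodule.Quotient.subsingleton_iff.1 (subsingleton_of_flen_zero h3)

end FlenMore

section HomLen
variable {R : Type*} [CommRing R] {M₂ X A B : Type*} [AddCommGroup M₂] [Module R M₂]
  [AddCommGroup X] [Module R X] [AddCommGroup A] [Module R A] [AddCommGroup B] [Module R B]

lemma map_mem_smul_top (I : Ideal R) (f : A →ₗ[R] B) {a : A}
    (h : a ∈ I • (⊤ : Submodule R A)) : f a ∈ I • (⊤ : Submodule R B) := by
  have : f a ∈ Submodule.map f (I • ⊤) := ⟨a, h, rfl⟩
  rw [Submodule.map_smul''] at this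
  exact (smul_mono_right _ le_top : I • _ ≤ I • (⊤ : Submodule R B)) this

lemma mem_smul_top_pi (I : Ideal R) {a : ℕ} (x : Fin a → X)
    (h : ∀ i, x i ∈ I • (⊤ : Submodule R X)) :
    x ∈ I • (⊤ : Submodule R (Fin a → X)) := by
  have hx : x = ∑ i, Pi.single i (x i) := (Finset.univ_sum_single x).symm
  rw [hx]
  refine Submodule.sum_mem _ fun i _ => ?_
  exact map_mem_smul_top I (LinearMap.single R (fun _ => X) i) (h i)

lemma exists_hom_embedding [Module.Finite R M₂] :
    ∃ (a : ℕ) (ev : (M₂ →ₗ[R] X) →ₗ[R] (Fin a → X)), Function.Injective ev := by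
  obtain ⟨a, v, hv⟩ := Module.Finite.exists_fin (R := R) (M := M₂)
  refine ⟨a, LinearMap.pi (fun i => LinearMap.applyₗ (v i)), ?_⟩
  intro φ ψ h
  refine LinearMap.ext_on hv ?_
  rintro x ⟨i, rfl⟩
  exact congrFun h i

lemma isNoetherian_hom [Module.Finite R M₂] [IsNoetherian R X] :
    IsNoetherian R (M₂ →ₗ[R] X) := by
  obtain ⟨a, ev, h⟩ := exists_hom_embedding (R := R) (M₂ := M₂) (X := X)
  exact isNoetherian_of_injective ev h

lemma isArtinian_hom [Module.Finite R M₂] [IsArtinian R X] :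
    IsArtinian R (M₂ →ₗ[R] X) := by
  obtain ⟨a, ev, h⟩ := exists_hom_embedding (R := R) (M₂ := M₂) (X := X)
  exact isArtinian_of_injective ev h

lemma smul_top_le_comap (I : Ideal R) (g : A →ₗ[R] B) :
    I • (⊤ : Submodule R A) ≤ Submodule.comap g (I • ⊤) :=
  fun _ hx => Submodule.mem_comap.2 (map_mem_smul_top I g hx)

lemma smul_top_quot_eq_bot (I : Ideal R) :
    I • (⊤ : Submodule R (A ⧸ (I • ⊤ : Submodule R A))) = ⊥ := by
  have htop : (⊤ : Submodule R (A ⧸ (I • ⊤ : Submodule R A))) =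
      Submodule.map (I • ⊤ : Submodule R A).mkQ ⊤ := by
    rw [Submodule.map_top, Submodule.range_mkQ]
  rw [htop, ← Submodule.map_smul'', eq_bot_iff]
  rintro x ⟨y, hy, rfl⟩
  simpa using hy


end HomLen

section Step2
variable {R : Type} [CommRing R] [IsNoetherianRing R] [IsLocalRing R]
    {M₁ M M₂ : Type} [AddCommGroup M₁] [Module R M₁] [AddCommGroup M] [Module R M]
    [AddCommGroup M₂] [Module R M₂]
    [Module.Finite R M₁] [Module.Finite R M] [Module.Finite R M₂]

open IsLocalRing

lemma step2 (f : M₁ →ₗ[R] M) (g : M →ₗ[R] M₂)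
    (hg : Function.Surjective g) (hfg : Function.Exact f g)
    (hiso : Nonempty (M ≃ₗ[R] M₁ × M₂)) (N : ℕ) :
    ∃ t : M₂ →ₗ[R] (M ⧸ ((maximalIdeal R) ^ N • ⊤ : Submodule R M)),
      (Submodule.mapQ _ _ g (smul_top_le_comap _ g)) ∘ₗ t =
        ((maximalIdeal R) ^ N • ⊤ : Submodule R M₂).mkQ := by
  classical
  set I : Ideal R := (maximalIdeal R) ^ N with hI
  set qM₁ : Submodule R M₁ := I • ⊤
  set qM : Submodule R M := I • ⊤
  set qM₂ : Submodule R M₂ := I • ⊤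
  set A' := M₁ ⧸ qM₁
  set B' := M ⧸ qM
  set C' := M₂ ⧸ qM₂
  set f' : A' →ₗ[R] B' := Submodule.mapQ _ _ f (smul_top_le_comap _ f) with hf'
  set g' : B' →ₗ[R] C' := Submodule.mapQ _ _ g (smul_top_le_comap _ g) with hg'
  -- finiteness instances
  haveI : Module.Finite R A' := Module.Finite.of_surjective qM₁.mkQ qM₁.mkQ_surjective
  haveI : Module.Finite R B' := Module.Finite.of_surjective qM.mkQ qM.mkQ_surjective
  haveI : Module.Finite R C' := Module.Finite.of_surjective qM₂.mkQ qM₂.mkQ_surjective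
  haveI : IsArtinian R A' :=
    isArtinian_of_pow_smul_top_eq_bot (maximalIdeal R) N A' (smul_top_quot_eq_bot I)
  haveI : IsArtinian R B' :=
    isArtinian_of_pow_smul_top_eq_bot (maximalIdeal R) N B' (smul_top_quot_eq_bot I)
  haveI : IsArtinian R C' :=
    isArtinian_of_pow_smul_top_eq_bot (maximalIdeal R) N C' (smul_top_quot_eq_bot I)
  haveI : IsArtinian R (M₂ →ₗ[R] B') := isArtinian_hom
  haveI : IsArtinian R (M₂ →ₗ[R] C') := isArtinian_hom
  haveI : IsArtinian R (M₂ →ₗ[R] A') := isArtinian_hom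
  haveI : IsArtinian R (M₂ →ₗ[R] A' × C') := isArtinian_hom
  -- surjectivity of g'
  have hg's : Function.Surjective g' := by
    intro c'
    obtain ⟨c, rfl⟩ := qM₂.mkQ_surjective c'
    obtain ⟨m, rfl⟩ := hg c
    exact ⟨qM.mkQ m, by rw [hg']; erw [Submodule.mapQ_apply]⟩
  -- exactness of f' g'
  have hexact : LinearMap.range f' = LinearMap.ker g' := by
    apply le_antisymm
    · rintro _ ⟨a', rfl⟩
      obtain ⟨a, rfl⟩ := qM₁.mkQ_surjective a'
      rw [LinearMap.mem_ker, hf', hg']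
      erw [Submodule.mapQ_apply]
      rw [hfg.apply_apply_eq_zero a]
      exact (Submodule.Quotient.mk_eq_zero _).2 (Submodule.zero_mem _)
    · rintro b' hb'
      obtain ⟨b, rfl⟩ := qM.mkQ_surjective b'
      rw [LinearMap.mem_ker, hg'] at hb'
      erw [Submodule.mapQ_apply] at hb'
      rw [Submodule.Quotient.mk_eq_zero] at hb'
      -- g b ∈ qM₂ = I • ⊤ = map g (I • ⊤)
      have : g b ∈ Submodule.map g qM := by
        show g b ∈ Submodule.map g (I • ⊤)
        rw [Submodule.map_smul'', Submodule.map_top, LinearMap.range_eq_top.2 hg]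
        exact hb'
      obtain ⟨y, hy, hyb⟩ := this
      obtain ⟨a, ha⟩ := (hfg (b - y)).1 (by rw [map_sub, hyb, sub_self])
      refine ⟨qM₁.mkQ a, ?_⟩
      rw [hf']
      erw [Submodule.mapQ_apply]
      show Submodule.Quotient.mk (f a) = Submodule.Quotient.mk b
      rw [Submodule.Quotient.eq, ha, show b - y - b = -y by abel]
      exact Submodule.neg_mem _ hy
  -- the isomorphism B' ≃ A' × C'
  obtain ⟨e⟩ := hiso
  have eq2 : (I • ⊤ : Submodule R (M₁ × M₂)) = qM₁.prod qM₂ := by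
    apply le_antisymm
    · rw [Submodule.smul_le]
      rintro r hr ⟨x1, x2⟩ -
      exact ⟨Submodule.smul_mem_smul hr Submodule.mem_top,
             Submodule.smul_mem_smul hr Submodule.mem_top⟩
    · rintro ⟨x1, x2⟩ ⟨h1, h2⟩
      have hx : (x1, x2) = (LinearMap.inl R M₁ M₂) x1 + (LinearMap.inr R M₁ M₂) x2 := by simp
      rw [hx]
      exact Submodule.add_mem _ (map_mem_smul_top I _ h1) (map_mem_smul_top I _ h2)
  have eq1 : Submodule.map (e : M →ₗ[R] M₁ × M₂) qM = (I • ⊤ : Submodule R (M₁ × M₂)) := by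
    show Submodule.map (e : M →ₗ[R] M₁ × M₂) (I • ⊤) = I • ⊤
    rw [Submodule.map_smul'', Submodule.map_top, LinearEquiv.range]
  have hkerpm : LinearMap.ker ((qM₁.mkQ).prodMap (qM₂.mkQ)) = qM₁.prod qM₂ := by
    rw [LinearMap.ker_prodMap, Submodule.ker_mkQ, Submodule.ker_mkQ]
  have hpmsurj : Function.Surjective ((qM₁.mkQ).prodMap (qM₂.mkQ)) :=
    Function.Surjective.prodMap qM₁.mkQ_surjective qM₂.mkQ_surjective
  have eB : B' ≃ₗ[R] A' × C' :=
    (Submodule.Quotient.equiv qM (I • ⊤ : Submodule R (M₁ × M₂)) e eq1).trans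
      ((Submodule.quotEquivOfEq _ _ (eq2.trans hkerpm.symm)).trans
        (LinearMap.quotKerEquivOfSurjective _ hpmsurj))
  -- length bookkeeping
  have hB : flen R B' = flen R A' + flen R C' := by
    rw [flen_congr eB, flen_prod]
  have hBk : flen R B' = flen R (LinearMap.ker g') + flen R C' := by
    rw [flen_ker_range g', LinearMap.range_eq_top.2 hg's]
    congr 1
    exact flen_congr Submodule.topEquiv
  have hkg : flen R (LinearMap.ker g') = flen R A' := by omega
  have hinj : Function.Injective f' := by
    rw [← LinearMap.ker_eq_bot]
    have h1 := flen_ker_range f'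
    rw [hexact, hkg] at h1
    have h0 : flen R (LinearMap.ker f') = 0 := by omega
    haveI := subsingleton_of_flen_zero h0
    exact Submodule.eq_bot_of_subsingleton
  have eAK : A' ≃ₗ[R] (LinearMap.ker g') :=
    (LinearEquiv.ofInjective f' hinj).trans (LinearEquiv.ofEq _ _ hexact)
  -- the Hom modules
  set Ψ : (M₂ →ₗ[R] B') →ₗ[R] (M₂ →ₗ[R] C') := LinearMap.llcomp R M₂ B' C' g' with hΨ
  -- kernel of Ψ is Hom(M₂, ker g')
  have eKer : (LinearMap.ker Ψ) ≃ₗ[R] (M₂ →ₗ[R] (LinearMap.ker g')) := by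
    refine LinearEquiv.symm (LinearEquiv.ofLinear
      (LinearMap.codRestrict (LinearMap.ker Ψ)
        (LinearMap.llcomp R M₂ (LinearMap.ker g') B' (LinearMap.ker g').subtype) ?_)
      { toFun := fun φ => LinearMap.codRestrict (LinearMap.ker g') φ.1
          (fun x => by
            have h2 := LinearMap.congr_fun φ.2 x
            exact h2)
        map_add' := fun φ ψ => by ext x; rfl
        map_smul' := fun r φ => by ext x; rfl } ?_ ?_)
    · intro ψ
      rw [LinearMap.mem_ker]
      ext x
      exact (ψ x).2
    · ext φ x
      rfl
    · ext φ x
      rfl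
  haveI : IsArtinian R (M₂ →ₗ[R] ↥(LinearMap.ker g')) := isArtinian_hom
  have hkerlen : flen R (LinearMap.ker Ψ) = flen R (M₂ →ₗ[R] A') := by
    rw [flen_congr (N := M₂ →ₗ[R] (LinearMap.ker g')) eKer]
    exact (flen_congr (LinearEquiv.arrowCongr (LinearEquiv.refl R M₂) eAK.symm))
  -- total length of Hom(M₂, B')
  have hVlen : flen R (M₂ →ₗ[R] B') = flen R (M₂ →ₗ[R] A') + flen R (M₂ →ₗ[R] C') := by
    rw [flen_congr (LinearEquiv.arrowCongr (LinearEquiv.refl R M₂) eB),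
      flen_congr (LinearMap.prodEquiv (R := R) (S := R)).symm ]
    exact flen_prod
  -- conclude surjectivity of Ψ
  have hrange : LinearMap.range Ψ = ⊤ := by
    apply eq_top_of_flen_eq
    have h1 := flen_ker_range Ψ
    rw [hkerlen] at h1
    omega
  have hmem : qM₂.mkQ ∈ LinearMap.range Ψ := hrange ▸ Submodule.mem_top
  obtain ⟨t, ht⟩ := hmem
  exact ⟨t, ht⟩

end Step2
section Approx
variable {R : Type} [CommRing R] [IsNoetherianRing R]
    {M M₂ : Type} [AddCommGroup M] [Module R M] [AddCommGroup M₂] [Module R M₂]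
    [Module.Finite R M] [Module.Finite R M₂]

lemma approx_lift (I : Ideal R) :
    ∃ c : ℕ, ∀ (n : ℕ) (t : M₂ →ₗ[R] M ⧸ (I ^ (n + c) • ⊤ : Submodule R M)),
      ∃ s : M₂ →ₗ[R] M, ∀ (x : M₂) (y : M),
        t x = Submodule.Quotient.mk y → s x - y ∈ (I ^ n • ⊤ : Submodule R M) := by
  classical
  obtain ⟨a, v, hv⟩ := Module.Finite.exists_fin (R := R) (M := M₂)
  let p : (Fin a → R) →ₗ[R] M₂ := Fintype.linearCombination R v
  have hp : Function.Surjective p := by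
    rw [← LinearMap.range_eq_top, Fintype.range_linearCombination, hv]
  obtain ⟨b, w, hw⟩ := Submodule.fg_iff_exists_fin_generating_family.1
    (IsNoetherian.noetherian (LinearMap.ker p))
  let D : ((Fin a → R) →ₗ[R] M) →ₗ[R] (Fin b → M) :=
    LinearMap.pi (fun i => LinearMap.applyₗ (w i))
  obtain ⟨c, hc⟩ := Ideal.exists_pow_inf_eq_pow_smul I (LinearMap.range D)
  refine ⟨c, fun n t => ?_⟩
  obtain ⟨u, hu⟩ := Module.projective_lifting_property
    ((I ^ (n + c) • ⊤ : Submodule R M).mkQ) (t ∘ₗ p)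
    (I ^ (n + c) • ⊤ : Submodule R M).mkQ_surjective
  have hwker : ∀ i, w i ∈ LinearMap.ker p :=
    fun i => hw ▸ Submodule.subset_span ⟨i, rfl⟩
  have hDu : D u ∈ (I ^ (n + c) • ⊤ : Submodule R (Fin b → M)) ⊓ LinearMap.range D := by
    refine ⟨mem_smul_top_pi _ _ (fun i => ?_), ⟨u, rfl⟩⟩
    have h0 := LinearMap.congr_fun hu (w i)
    have h1 : p (w i) = 0 := LinearMap.mem_ker.1 (hwker i)
    simp only [LinearMap.comp_apply, h1, map_zero] at h0
    rwa [Submodule.mkQ_apply, Submodule.Quotient.mk_eq_zero] at h0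
  rw [hc (n + c) (Nat.le_add_left c n)] at hDu
  have hDu2 : D u ∈ Submodule.map D (I ^ n • ⊤) := by
    have h1 : I ^ (n + c - c) •
        ((I ^ c • ⊤ : Submodule R (Fin b → M)) ⊓ LinearMap.range D) ≤
        I ^ n • LinearMap.range D := by
      have hnc : n + c - c = n := by omega
      rw [hnc]
      exact smul_mono_right _ inf_le_right
    have h2 : (I ^ n • LinearMap.range D : Submodule R (Fin b → M)) =
        Submodule.map D (I ^ n • ⊤) := by
      rw [Submodule.map_smul'', Submodule.map_top]
    exact h2 ▸ h1 hDu
  obtain ⟨u', hu'mem, hu'⟩ := hDu2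
  have hker : LinearMap.ker p ≤ LinearMap.ker (u - u') := by
    rw [← hw, Submodule.span_le]
    rintro _ ⟨i, rfl⟩
    have hD0 : D (u - u') = 0 := by rw [map_sub, hu', sub_self]
    have : (D (u - u')) i = 0 := by rw [hD0]; rfl
    exact LinearMap.mem_ker.2 this
  let s : M₂ →ₗ[R] M := (Submodule.liftQ (LinearMap.ker p) (u - u') hker) ∘ₗ
    (p.quotKerEquivOfSurjective hp).symm.toLinearMap
  refine ⟨s, fun x y hxy => ?_⟩
  obtain ⟨z, rfl⟩ := hp x
  have hz : (p.quotKerEquivOfSurjective hp).symm (p z) = Submodule.Quotient.mk z := by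
    rw [LinearEquiv.symm_apply_eq]
    rfl
  have hsz : s (p z) = (u - u') z := by
    show (Submodule.liftQ _ _ hker) ((p.quotKerEquivOfSurjective hp).symm (p z)) = _
    rw [hz, Submodule.liftQ_apply]
  have h1 : u z - y ∈ (I ^ (n + c) • ⊤ : Submodule R M) := by
    have h0 := LinearMap.congr_fun hu z
    simp only [LinearMap.comp_apply] at h0
    rw [hxy, Submodule.mkQ_apply] at h0
    exact (Submodule.Quotient.eq _).1 h0
  have h3 : u z - y ∈ (I ^ n • ⊤ : Submodule R M) :=
    Submodule.smul_mono_left (Ideal.pow_le_pow_right (n.le_add_right c)) h1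
  have h2 : u' z ∈ (I ^ n • ⊤ : Submodule R M) :=
    map_mem_smul_top _ (LinearMap.applyₗ z) hu'mem
  rw [hsz]
  have heq : (u - u') z - y = (u z - y) - u' z := by
    simp only [LinearMap.sub_apply]; abel
  rw [heq]
  exact Submodule.sub_mem _ h3 h2

end Approx

section HomBound
variable {R : Type} [CommRing R] [IsNoetherianRing R]
    {M₂ : Type} [AddCommGroup M₂] [Module R M₂] [Module.Finite R M₂]

lemma hom_smul_bound (I : Ideal R) :
    ∃ c : ℕ, ∀ (n : ℕ) (φ : M₂ →ₗ[R] M₂),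
      (∀ x, φ x ∈ (I ^ (n + c) • ⊤ : Submodule R M₂)) →
      φ ∈ (I ^ n • ⊤ : Submodule R (M₂ →ₗ[R] M₂)) := by
  classical
  obtain ⟨a, v, hv⟩ := Module.Finite.exists_fin (R := R) (M := M₂)
  let ev : (M₂ →ₗ[R] M₂) →ₗ[R] (Fin a → M₂) := LinearMap.pi (fun i => LinearMap.applyₗ (v i))
  have hinj : Function.Injective ev := by
    intro φ ψ h
    refine LinearMap.ext_on hv ?_
    rintro x ⟨i, rfl⟩
    exact congrFun h i
  obtain ⟨c, hc⟩ := Ideal.exists_pow_inf_eq_pow_smul I (LinearMap.range ev)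
  refine ⟨c, fun n φ hφ => ?_⟩
  have h1 : ev φ ∈ (I ^ (n + c) • ⊤ : Submodule R (Fin a → M₂)) ⊓ LinearMap.range ev :=
    ⟨mem_smul_top_pi _ _ (fun i => hφ (v i)), ⟨φ, rfl⟩⟩
  rw [hc (n + c) (Nat.le_add_left c n)] at h1
  have h2 : ev φ ∈ Submodule.map ev (I ^ n • ⊤) := by
    have hle : I ^ (n + c - c) • ((I ^ c • ⊤ : Submodule R (Fin a → M₂)) ⊓ LinearMap.range ev)
        ≤ I ^ n • LinearMap.range ev := by
      have hnc : n + c - c = n := by omega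
      rw [hnc]; exact smul_mono_right _ inf_le_right
    have heq : (I ^ n • LinearMap.range ev : Submodule R (Fin a → M₂)) =
        Submodule.map ev (I ^ n • ⊤) := by rw [Submodule.map_smul'', Submodule.map_top]
    exact heq ▸ hle h1
  obtain ⟨ψ, hψ, hψeq⟩ := h2
  rwa [← hinj hψeq]
end HomBound

open IsLocalRing in
/-- If `0 → M₁ → M → M₂ → 0` is a short exact sequence of finitely generated modules
over a Noetherian local ring and `M ≅ M₁ ⊕ M₂` as abstract `R`-modules, then the
sequence splits. -/
theorem stmt_1 (R : Type) [CommRing R] [IsNoetherianRing R] [IsLocalRing R]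
    (M₁ M M₂ : Type) [AddCommGroup M₁] [Module R M₁] [AddCommGroup M] [Module R M]
    [AddCommGroup M₂] [Module R M₂]
    [Module.Finite R M₁] [Module.Finite R M] [Module.Finite R M₂]
    (f : M₁ →ₗ[R] M) (g : M →ₗ[R] M₂)
    (hf : Function.Injective f) (hg : Function.Surjective g) (hfg : Function.Exact f g)
    (hiso : Nonempty (M ≃ₗ[R] M₁ × M₂)) :
    ∃ s : M₂ →ₗ[R] M, g ∘ₗ s = LinearMap.id := by
  obtain ⟨c₁, hc₁⟩ := approx_lift (R := R) (M := M) (M₂ := M₂) (maximalIdeal R)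
  obtain ⟨c₂, hc₂⟩ := hom_smul_bound (R := R) (M₂ := M₂) (maximalIdeal R)
  set Φ : (M₂ →ₗ[R] M) →ₗ[R] (M₂ →ₗ[R] M₂) := LinearMap.llcomp R M₂ M M₂ g with hΦ
  set J : Submodule R (M₂ →ₗ[R] M₂) := LinearMap.range Φ with hJ
  suffices hid : LinearMap.id ∈ J by
    obtain ⟨s, hs⟩ := hid
    exact ⟨s, hs⟩
  haveI : Module.Finite R (M₂ →ₗ[R] M₂) := ⟨IsNoetherian.noetherian ⊤⟩
  haveI : Module.Finite R ((M₂ →ₗ[R] M₂) ⧸ J) :=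
    Module.Finite.of_surjective J.mkQ J.mkQ_surjective
  have hKrull := Ideal.iInf_pow_smul_eq_bot_of_isLocalRing
      (I := maximalIdeal R) (M := (M₂ →ₗ[R] M₂) ⧸ J)
      (Ideal.IsMaximal.ne_top (maximalIdeal.isMaximal R))
  have hmem : ∀ k : ℕ, J.mkQ LinearMap.id ∈
      (maximalIdeal R ^ k • ⊤ : Submodule R ((M₂ →ₗ[R] M₂) ⧸ J)) := by
    intro k
    obtain ⟨t, ht⟩ := step2 f g hg hfg hiso ((k + c₂) + c₁)
    obtain ⟨s, hs⟩ := hc₁ (k + c₂) t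
    set φ₀ : M₂ →ₗ[R] M₂ := g ∘ₗ s - LinearMap.id with hφ₀
    have hφ : ∀ x : M₂, φ₀ x ∈
        (maximalIdeal R ^ (k + c₂) • ⊤ : Submodule R M₂) := by
      intro x
      obtain ⟨y, hy⟩ := Submodule.mkQ_surjective _ (t x)
      have h1 : s x - y ∈ (maximalIdeal R ^ (k + c₂) • ⊤ : Submodule R M) := hs x y hy.symm
      have h2 : g (s x) - g y ∈ (maximalIdeal R ^ (k + c₂) • ⊤ : Submodule R M₂) := by
        have := map_mem_smul_top _ g h1
        rwa [map_sub] at this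
      have h3 : g y - x ∈ (maximalIdeal R ^ ((k + c₂) + c₁) • ⊤ : Submodule R M₂) := by
        have h4 := LinearMap.congr_fun ht x
        simp only [LinearMap.comp_apply] at h4
        rw [← hy] at h4
        erw [Submodule.mapQ_apply] at h4
        rw [Submodule.mkQ_apply] at h4
        exact (Submodule.Quotient.eq _).1 h4
      have h5 : g y - x ∈ (maximalIdeal R ^ (k + c₂) • ⊤ : Submodule R M₂) :=
        Submodule.smul_mono_left (Ideal.pow_le_pow_right (Nat.le_add_right _ _)) h3
      have h6 : φ₀ x = (g (s x) - g y) + (g y - x) := by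
        rw [hφ₀]
        simp only [LinearMap.sub_apply, LinearMap.comp_apply, LinearMap.id_apply]
        abel
      rw [h6]
      exact Submodule.add_mem _ h2 h5
    have hφmem : φ₀ ∈
        (maximalIdeal R ^ k • ⊤ : Submodule R (M₂ →ₗ[R] M₂)) := hc₂ k _ hφ
    have hgs : J.mkQ (g ∘ₗ s) = 0 := by
      rw [Submodule.mkQ_apply, Submodule.Quotient.mk_eq_zero]
      exact ⟨s, rfl⟩
    have hsplit : J.mkQ LinearMap.id = - J.mkQ φ₀ + J.mkQ (g ∘ₗ s) := by
      rw [← map_neg, ← map_add]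
      congr 1
      rw [hφ₀]
      abel
    have h7 : J.mkQ φ₀ ∈
        (maximalIdeal R ^ k • ⊤ : Submodule R ((M₂ →ₗ[R] M₂) ⧸ J)) :=
      map_mem_smul_top _ J.mkQ hφmem
    rw [hsplit, hgs, add_zero]
    exact Submodule.neg_mem _ h7
  have hfin : J.mkQ LinearMap.id ∈
      (⨅ k : ℕ, maximalIdeal R ^ k • ⊤ : Submodule R ((M₂ →ₗ[R] M₂) ⧸ J)) :=
    (Submodule.mem_iInf _).2 hmem
  rw [hKrull] at hfin
  rw [Submodule.mem_bot] at hfin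
  exact (Submodule.Quotient.mk_eq_zero J).1 hfin
end

section
/- Let (R, m) be a Noetherian local domain and f ∈ R a nonzero non-unit. Suppose ζ : 0 → R → A → R_f → 0 is a short exact sequence of R-modules such that A decomposes as a direct sum of two nonzero R-modules. Then ζ splits. -/
set_option linter.unusedSectionVars false

section prelim
variable {R : Type} [CommRing R] [IsDomain R]
    {f : R} (hf0 : f ≠ 0)
    {A : Type} [AddCommGroup A] [Module R A]
    (ι : R →ₗ[R] A) (g : A →ₗ[R] Localization.Away f)

local notation "S" => Localization.Away f

theorem hfdivS (n : ℕ) (x : S) : ∃ y, x = (f ^ n) • y := by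
  have hu : IsUnit (algebraMap R S (f ^ n)) := by
    rw [map_pow]
    exact (IsLocalization.map_units (M := Submonoid.powers f) S
      ⟨f, Submonoid.mem_powers f⟩).pow n
  obtain ⟨u, hu'⟩ := hu
  exact ⟨(↑u⁻¹ : S) * x, by rw [Algebra.smul_def, ← hu', ← mul_assoc, u.mul_inv, one_mul]⟩

theorem hfinjS (n : ℕ) (x : S) (h : (f ^ n) • x = 0) : x = 0 := by
  have hu : IsUnit (algebraMap R S (f ^ n)) := by
    rw [map_pow]
    exact (IsLocalization.map_units (M := Submonoid.powers f) S
      ⟨f, Submonoid.mem_powers f⟩).pow n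
  obtain ⟨u, hu'⟩ := hu
  rw [Algebra.smul_def, ← hu'] at h
  exact (Units.mul_right_eq_zero u).mp h

include hf0 in
theorem hpow : Submonoid.powers f ≤ nonZeroDivisors R := by
  rw [Submonoid.powers_le]; exact mem_nonZeroDivisors_of_ne_zero hf0

include hf0 in
theorem hSdom : IsDomain S :=
  IsLocalization.isDomain_of_le_nonZeroDivisors S (hpow hf0)

include hf0 in
theorem hjinj : Function.Injective (algebraMap R S) :=
  IsLocalization.injective S (hpow hf0)

include hf0 in
theorem hStf (r : R) (hr : r ≠ 0) (x : S) (h : r • x = 0) : x = 0 := by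
  haveI := hSdom hf0
  rw [Algebra.smul_def, mul_eq_zero] at h
  rcases h with h | h
  · exact absurd (hjinj hf0 (h.trans (map_zero _).symm)) hr
  · exact h

variable (hexact : Function.Exact ι g) (hg : Function.Surjective g)

include hexact hg in
theorem hP1 (a : A) (n : ℕ) : ∃ (r : R) (a' : A), a = ι r + (f ^ n) • a' := by
  obtain ⟨y, hy⟩ := hfdivS n (g a)
  obtain ⟨a'', ha''⟩ := hg y
  have h0 : g (a - (f ^ n) • a'') = 0 := by
    rw [map_sub, map_smul, ha'', hy, sub_self]
  obtain ⟨r, hr⟩ := (hexact _).mp h0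
  exact ⟨r, a'', by rw [hr, sub_add_cancel]⟩

variable (hι : Function.Injective ι)

include hexact hι in
theorem hP2 (r : R) (n : ℕ) (a' : A) (h : ι r = (f ^ n) • a') : ∃ r', r = f ^ n * r' := by
  have h1 : (f ^ n) • g a' = 0 := by
    rw [← map_smul, ← h]
    exact (hexact (ι r)).mpr ⟨r, rfl⟩
  have h2 : g a' = 0 := hfinjS n _ h1
  obtain ⟨r', hr'⟩ := (hexact _).mp h2
  refine ⟨r', hι ?_⟩
  rw [h, ← hr', ← map_smul, smul_eq_mul]

end prelim

theorem hP3 {R : Type} [CommRing R] [IsNoetherianRing R] [IsLocalRing R]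
    {f : R} (hfu : ¬ IsUnit f) (r : R) (hr : ∀ n : ℕ, ∃ r', r = f ^ n * r') : r = 0 := by
  have hIne : Ideal.span {f} ≠ ⊤ := by
    rw [Ne, Ideal.span_singleton_eq_top]; exact hfu
  have hbot := Ideal.iInf_pow_eq_bot_of_isLocalRing (Ideal.span {f}) hIne
  have hmem : r ∈ ⨅ n : ℕ, Ideal.span {f} ^ n := by
    rw [Submodule.mem_iInf]
    intro n
    rw [Ideal.span_singleton_pow, Ideal.mem_span_singleton]
    obtain ⟨r', hr'⟩ := hr n
    exact ⟨r', hr'⟩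
  rw [hbot] at hmem
  simpa using hmem

theorem hjac {R : Type} [CommRing R] [IsLocalRing R] {f : R} (hfu : ¬ IsUnit f) :
    Ideal.span {f} ≤ Ideal.jacobson ⊥ := by
  rw [IsLocalRing.jacobson_eq_maximalIdeal ⊥ bot_ne_top, Ideal.span_le,
    Set.singleton_subset_iff]
  exact hfu


theorem aux_main (R : Type) [CommRing R] [IsNoetherianRing R] [IsLocalRing R] [IsDomain R]
    (f : R) (hfu : ¬ IsUnit f)
    (A : Type) [AddCommGroup A] [Module R A]
    (ι : R →ₗ[R] A) (g : A →ₗ[R] Localization.Away f)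
    (hι : Function.Injective ι) (hg : Function.Surjective g) (hexact : Function.Exact ι g)
    (hP1 : ∀ (a : A) (n : ℕ), ∃ (r : R) (a' : A), a = ι r + (f ^ n) • a')
    (hP2 : ∀ (r : R) (n : ℕ) (a' : A), ι r = (f ^ n) • a' → ∃ r', r = f ^ n * r')
    (hP3 : ∀ r : R, (∀ n : ℕ, ∃ r', r = f ^ n * r') → r = 0)
    (hfinjS : ∀ (n : ℕ) (x : Localization.Away f), (f ^ n) • x = 0 → x = 0)
    (hStf : ∀ (r : R), r ≠ 0 → ∀ (x : Localization.Away f), r • x = 0 → x = 0)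
    (e : A →ₗ[R] A) (he : ∀ a, e (e a) = e a)
    (heB : ∃ b, b ≠ 0 ∧ e b = b)
    (hdiv : ∀ n : ℕ, ∃ a, e (ι 1) = (f ^ n) • a) :
    ∃ s : Localization.Away f →ₗ[R] A, g ∘ₗ s = LinearMap.id := by
  set S := Localization.Away f
  -- P5 : fixed points of e are divisible within fixed points
  have hP5 : ∀ b : A, e b = b → ∀ n : ℕ, ∃ b', b = (f ^ n) • b' ∧ e b' = b' := by
    intro b hb n
    obtain ⟨r, a', hra⟩ := hP1 (e b) n
    obtain ⟨an, hn⟩ := hdiv n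
    have hιr : e (ι r) = (f ^ n) • (r • an) := by
      have h1 : ι r = r • ι 1 := by rw [← map_smul, smul_eq_mul, mul_one]
      rw [h1, map_smul, hn, smul_comm]
    have h1 : e b = (f ^ n) • (r • an + e a') := by
      calc e b = e (e b) := (he b).symm
        _ = e (ι r) + (f ^ n) • e a' := by rw [hra, map_add, map_smul]
        _ = (f ^ n) • (r • an + e a') := by rw [hιr, smul_add]
    refine ⟨e (r • an + e a'), ?_, he _⟩
    calc b = e b := hb.symm
      _ = e (e b) := (he b).symm
      _ = (f ^ n) • e (r • an + e a') := by rw [h1, map_smul]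
  -- P6 : g is injective on fixed points
  have hP6 : ∀ b : A, e b = b → g b = 0 → b = 0 := by
    intro b hb hgb
    obtain ⟨r, hr⟩ := (hexact b).mp hgb
    have hr0 : r = 0 := by
      refine hP3 r fun n => ?_
      obtain ⟨b', hb', _⟩ := hP5 b hb n
      exact hP2 r n b' (hr.trans hb')
    rw [← hr, hr0, map_zero]
  -- the element m
  obtain ⟨b₀, hb₀ne, hb₀⟩ := heB
  have hx₀ : g b₀ ≠ 0 := fun h => hb₀ne (hP6 b₀ hb₀ h)
  obtain ⟨⟨m, fk⟩, hm⟩ := IsLocalization.surj (Submonoid.powers f) (g b₀)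
  obtain ⟨k, hk⟩ := fk.2
  have hb₁ : e ((fk : R) • b₀) = (fk : R) • b₀ := by rw [map_smul, hb₀]
  have hm' : g ((fk : R) • b₀) = algebraMap R S m := by
    rw [map_smul, Algebra.smul_def, mul_comm]; exact hm
  have hmne : m ≠ 0 := by
    intro h0
    apply hx₀
    have hk' : f ^ k = (fk : R) := hk
    refine hfinjS k (g b₀) ?_
    rw [hk']
    calc (fk : R) • g b₀ = g ((fk : R) • b₀) := (map_smul g _ _).symm
      _ = algebraMap R S m := hm'
      _ = 0 := by rw [h0, map_zero]
  -- P9 : m • S ⊆ g(fixed points)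
  have hP9 : ∀ x : S, ∃ b, e b = b ∧ g b = m • x := by
    intro x
    obtain ⟨⟨t, fl⟩, ht⟩ := IsLocalization.surj (Submonoid.powers f) x
    obtain ⟨l, hl⟩ := fl.2
    obtain ⟨b₂, hb₂eq, hb₂fix⟩ := hP5 ((fk : R) • b₀) hb₁ l
    refine ⟨t • b₂, by rw [map_smul, hb₂fix], ?_⟩
    have h5 : (f ^ l) • g b₂ = algebraMap R S m := by
      rw [← map_smul, ← hb₂eq, hm']
    have h6 : (f ^ l) • (g (t • b₂) - m • x) = 0 := by
      rw [smul_sub]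
      have hA : (f ^ l) • g (t • b₂) = t • algebraMap R S m := by
        rw [map_smul, smul_comm, h5]
      have hl' : f ^ l = (fl : R) := hl
      have hfl : (f ^ l : R) • x = algebraMap R S t := by
        rw [Algebra.smul_def, hl', mul_comm]; exact ht
      have hB : (f ^ l) • (m • x) = t • algebraMap R S m := by
        rw [smul_comm, hfl, Algebra.smul_def, Algebra.smul_def]
        ring
      rw [hA, hB, sub_self]
    have := hfinjS l _ h6
    rw [sub_eq_zero] at this
    exact this
  -- gamma
  set γ : R →ₗ[R] A := ι - e ∘ₗ ι with hγdef
  have hγ : ∀ r : R, γ r = ι r - e (ι r) := fun r => rfl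
  have hγker : ∀ r : R, e (γ r) = 0 := by
    intro r; rw [hγ, map_sub, he, sub_self]
  have hγinj : Function.Injective γ := by
    intro r r' hrr
    have h1 : γ (r - r') = 0 := by rw [map_sub, hrr, sub_self]
    rw [hγ, sub_eq_zero] at h1
    have h2 : e (ι (r - r')) = ι (r - r') := h1.symm
    have h3 : r - r' = 0 := by
      refine hP3 _ fun n => ?_
      obtain ⟨b', hb', _⟩ := hP5 _ h2 n
      exact hP2 _ n b' hb'
    exact sub_eq_zero.mp h3
  -- P11
  have hP11 : ∀ c : A, e c = 0 → ∀ b : A, e b = b → g c = g b → ∃ r, c = γ r := by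
    intro c hc b hb hcb
    have h1 : g (c - b) = 0 := by rw [map_sub, hcb, sub_self]
    obtain ⟨r, hr⟩ := (hexact _).mp h1
    have h2 : e (ι r) = -b := by rw [hr, map_sub, hc, hb, zero_sub]
    refine ⟨r, ?_⟩
    rw [hγ, h2, sub_neg_eq_add, hr, sub_add_cancel]
  -- key : m • ker e ⊆ range γ
  have key : ∀ c : A, e c = 0 → ∃ r, m • c = γ r := by
    intro c hc
    obtain ⟨b, hbfix, hbg⟩ := hP9 (g c)
    exact hP11 (m • c) (by rw [map_smul, hc, smul_zero]) b hbfix (by rw [map_smul, hbg])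
  -- A is m-torsion-free
  have hAtf : ∀ a : A, m • a = 0 → a = 0 := by
    intro a ha
    have h1 : g a = 0 := by
      refine hStf m hmne _ ?_
      rw [← map_smul, ha, map_zero]
    obtain ⟨r, hr⟩ := (hexact _).mp h1
    have h2 : ι (m * r) = 0 := by rw [← smul_eq_mul, map_smul, hr, ha]
    have h3 : m * r = 0 := hι (h2.trans (map_zero ι).symm)
    rcases mul_eq_zero.mp h3 with h | h
    · exact absurd h hmne
    · rw [← hr, h, map_zero]
  -- the linear map ψ : ker e →ₗ R
  set ψfun : LinearMap.ker e → R := fun c => (key c.1 c.2).choose with hψdef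
  have hψspec : ∀ c : LinearMap.ker e, m • (c : A) = γ (ψfun c) :=
    fun c => (key c.1 c.2).choose_spec
  set ψ : LinearMap.ker e →ₗ[R] R :=
    { toFun := ψfun
      map_add' := by
        intro c c'
        apply hγinj
        rw [map_add, ← hψspec, ← hψspec, ← hψspec, Submodule.coe_add, smul_add]
      map_smul' := by
        intro t c
        apply hγinj
        rw [RingHom.id_apply, map_smul, ← hψspec, ← hψspec, Submodule.coe_smul,
          smul_comm] } with hψ
  have hψinj : Function.Injective ψ := by
    intro c c' hcc
    have hcc' : ψfun c = ψfun c' := hcc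
    have h1 : m • ((c : A) - (c' : A)) = 0 := by
      rw [smul_sub, hψspec, hψspec, hcc', sub_self]
    exact Subtype.ext (sub_eq_zero.mp (hAtf _ h1))
  haveI : IsNoetherian R (LinearMap.ker e) := isNoetherian_of_injective ψ hψinj
  have hfg : (LinearMap.ker e).FG := (Submodule.fg_top _).mp (IsNoetherian.noetherian ⊤)
  -- Nakayama
  have hle : LinearMap.ker e ≤ LinearMap.range γ ⊔ (Ideal.span {f}) • (LinearMap.ker e) := by
    intro c hc
    have hc' : e c = 0 := hc
    obtain ⟨r, a', hra⟩ := hP1 c 1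
    have hcc : c = γ r + f • (a' - e a') := by
      have h1 : e (ι r) + (f ^ 1) • e a' = 0 := by
        rw [← map_smul, ← map_add, ← hra, hc']
      rw [pow_one] at h1 hra
      rw [hγ, smul_sub, hra]
      have h2 : e (ι r) = - (f • e a') := by
        rw [eq_neg_iff_add_eq_zero]; simpa using h1
      rw [h2]
      abel
    rw [hcc]
    refine Submodule.add_mem_sup (LinearMap.mem_range_self γ r) ?_
    refine Submodule.smul_mem_smul (Ideal.mem_span_singleton_self f) ?_
    show e (a' - e a') = 0
    rw [map_sub, he, sub_self]
  have hjac' : Ideal.span {f} ≤ Ideal.jacobson ⊥ := by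
    rw [IsLocalRing.jacobson_eq_maximalIdeal ⊥ bot_ne_top, Ideal.span_le,
      Set.singleton_subset_iff]
    exact hfu
  have hNak : LinearMap.ker e ≤ LinearMap.range γ :=
    Submodule.le_of_le_smul_of_le_jacobson_bot hfg hjac' hle
  -- surjectivity of g on fixed points
  have hsurj : ∀ x : S, ∃ b, e b = b ∧ g b = x := by
    intro x
    obtain ⟨a, ha⟩ := hg x
    have hker : a - e a ∈ LinearMap.ker e := by
      rw [LinearMap.mem_ker, map_sub, he, sub_self]
    obtain ⟨r, hr⟩ := hNak hker
    rw [hγ] at hr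
    have h7 : e (a - ι r) = a - ι r := by
      rw [map_sub]
      have h8 := sub_eq_sub_iff_add_eq_add.mp hr
      rw [sub_eq_sub_iff_add_eq_add, add_comm (e a)]
      exact h8
    refine ⟨a - ι r, h7, ?_⟩
    have h9 : g (ι r) = 0 := (hexact _).mpr ⟨r, rfl⟩
    rw [map_sub, h9, sub_zero, ha]
  -- assemble
  set Bs : Submodule R A := LinearMap.range e with hBs
  have hBfix : ∀ b : A, b ∈ Bs → e b = b := by
    rintro b ⟨a, rfl⟩; exact he a
  set gB : Bs →ₗ[R] S := g ∘ₗ Bs.subtype with hgB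
  have hbij : Function.Bijective gB := by
    constructor
    · intro b b' hbb
      have h1 : g ((b : A) - (b' : A)) = 0 := by
        rw [map_sub, sub_eq_zero]; exact hbb
      have h2 : e ((b : A) - (b' : A)) = (b : A) - (b' : A) := by
        rw [map_sub, hBfix _ b.2, hBfix _ b'.2]
      exact Subtype.ext (sub_eq_zero.mp (hP6 _ h2 h1))
    · intro x
      obtain ⟨b, hbfix, hbg⟩ := hsurj x
      exact ⟨⟨b, ⟨b, hbfix⟩⟩, hbg⟩
  set eqv := LinearEquiv.ofBijective gB hbij with heqv
  refine ⟨Bs.subtype ∘ₗ eqv.symm.toLinearMap, ?_⟩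
  apply LinearMap.ext
  intro x
  have h10 : gB (eqv.symm x) = x := by
    have := eqv.apply_symm_apply x
    rwa [heqv, LinearEquiv.ofBijective_apply] at this
  simpa [gB] using h10

/-- Let `(R,m)` be a Noetherian local domain and `f` a nonzero non-unit.  If
`ζ : 0 → R → A → R_f → 0` is a short exact sequence of `R`-modules such that `A`
decomposes as a direct sum of two nonzero submodules, then `ζ` splits. -/
theorem stmt_19 (R : Type) [CommRing R] [IsNoetherianRing R] [IsLocalRing R] [IsDomain R]
    (f : R) (hf0 : f ≠ 0) (hfu : ¬ IsUnit f)
    (A : Type) [AddCommGroup A] [Module R A]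
    (ι : R →ₗ[R] A) (g : A →ₗ[R] Localization.Away f)
    (hι : Function.Injective ι) (hg : Function.Surjective g) (hexact : Function.Exact ι g)
    (hdec : ∃ B C : Submodule R A, IsCompl B C ∧ B ≠ ⊥ ∧ C ≠ ⊥) :
    ∃ s : Localization.Away f →ₗ[R] A, g ∘ₗ s = LinearMap.id := by
  obtain ⟨B, C, hBC, hBne, hCne⟩ := hdec
  have hP1' := hP1 ι g hexact hg
  have hP2' := hP2 ι g hexact hι
  have hP3' := fun r hr => hP3 hfu r hr
  have hfinjS' := fun n x h => hfinjS (f := f) n x h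
  have hStf' := fun r hr x h => hStf hf0 r hr x h
  set π := Submodule.projectionOnto B C hBC with hπ
  set e : A →ₗ[R] A := B.subtype ∘ₗ π with hedef
  have heapp : ∀ a : A, e a = ↑(π a) := fun a => rfl
  have hefixB : ∀ b : A, b ∈ B → e b = b := by
    intro b hb
    have := Submodule.linearProjOfIsCompl_apply_left hBC ⟨b, hb⟩
    rw [heapp, this]
  have hekillC : ∀ c : A, c ∈ C → e c = 0 := by
    intro c hc
    have := Submodule.linearProjOfIsCompl_apply_right hBC ⟨c, hc⟩
    rw [heapp, this, Submodule.coe_zero]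
  have he : ∀ a : A, e (e a) = e a := fun a => hefixB _ (π a).2
  -- dichotomy
  have hdich : ∀ n : ℕ, (∃ a', e (ι 1) = (f ^ n) • a') ∨
      (∃ a', ι 1 - e (ι 1) = (f ^ n) • a') := by
    intro n
    obtain ⟨r, a₁, hra⟩ := hP1' (e (ι 1)) n
    have hιr : e (ι r) = r • e (ι 1) := by
      rw [show ι r = r • ι 1 by rw [← map_smul, smul_eq_mul, mul_one], map_smul]
    have hιrr : ι (r * r) = r • ι r := by rw [← map_smul, smul_eq_mul]
    have h2 : ι r + (f ^ n) • a₁ = ι (r * r) + (f ^ n) • (r • a₁ + e a₁) := by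
      calc ι r + (f ^ n) • a₁ = e (ι 1) := hra.symm
        _ = e (e (ι 1)) := (he _).symm
        _ = e (ι r) + (f ^ n) • e a₁ := by rw [hra, map_add, map_smul]
        _ = r • e (ι 1) + (f ^ n) • e a₁ := by rw [hιr]
        _ = r • (ι r + (f ^ n) • a₁) + (f ^ n) • e a₁ := by rw [hra]
        _ = ι (r * r) + (f ^ n) • (r • a₁ + e a₁) := by
            rw [hιrr, smul_add r, smul_add (f ^ n), smul_comm r (f ^ n) a₁]
            abel
    have h3 : ι (r - r * r) = (f ^ n) • (r • a₁ + e a₁ - a₁) := by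
      rw [map_sub, smul_sub]
      rw [sub_eq_sub_iff_add_eq_add]
      exact h2.trans (add_comm _ _)
    obtain ⟨t, ht⟩ := hP2' (r - r * r) n _ h3
    rcases IsLocalRing.isUnit_or_isUnit_one_sub_self r with hu | hu
    · obtain ⟨u, hu'⟩ := hu
      have hh : r * (1 - r) = f ^ n * t := by rw [← ht]; ring
      have h1r : 1 - r = f ^ n * (t * ↑u⁻¹) := by
        calc 1 - r = (↑u⁻¹ * ↑u) * (1 - r) := by rw [u.inv_mul, one_mul]
          _ = ↑u⁻¹ * (r * (1 - r)) := by rw [hu', mul_assoc]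
          _ = ↑u⁻¹ * (f ^ n * t) := by rw [hh]
          _ = f ^ n * (t * ↑u⁻¹) := by ring
      right
      refine ⟨ι (t * ↑u⁻¹) - a₁, ?_⟩
      rw [hra, smul_sub]
      have h4 : ι 1 - ι r = (f ^ n) • ι (t * ↑u⁻¹) := by
        rw [← map_sub, h1r, ← smul_eq_mul, map_smul]
      rw [sub_add_eq_sub_sub, h4]
    · obtain ⟨u, hu'⟩ := hu
      have hh : r * (1 - r) = f ^ n * t := by rw [← ht]; ring
      have h1r : r = f ^ n * (t * ↑u⁻¹) := by
        calc r = r * ((1 - r) * ↑u⁻¹) := by rw [← hu', u.mul_inv, mul_one]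
          _ = (r * (1 - r)) * ↑u⁻¹ := by ring
          _ = f ^ n * (t * ↑u⁻¹) := by rw [hh]; ring
      left
      refine ⟨ι (t * ↑u⁻¹) + a₁, ?_⟩
      rw [hra, smul_add]
      congr 1
      rw [← map_smul, smul_eq_mul, ← h1r]
  by_cases hall : ∀ n : ℕ, ∃ a', e (ι 1) = (f ^ n) • a'
  · obtain ⟨b, hbB, hbne⟩ := Submodule.ne_bot_iff B |>.mp hBne
    exact aux_main R f hfu A ι g hι hg hexact hP1' hP2' hP3' hfinjS' hStf'
      e he ⟨b, hbne, hefixB b hbB⟩ hall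
  · push_neg at hall
    obtain ⟨n₀, hn₀⟩ := hall
    set e' : A →ₗ[R] A := LinearMap.id - e with he'def
    have he'app : ∀ a : A, e' a = a - e a := fun a => rfl
    have he' : ∀ a : A, e' (e' a) = e' a := by
      intro a
      show (a - e a) - e (a - e a) = a - e a
      rw [map_sub, he, sub_self, sub_zero]
    have heB' : ∃ c, c ≠ 0 ∧ e' c = c := by
      obtain ⟨c, hcC, hcne⟩ := Submodule.ne_bot_iff C |>.mp hCne
      exact ⟨c, hcne, by rw [he'app, hekillC c hcC, sub_zero]⟩
    have hdiv' : ∀ n : ℕ, ∃ a', e' (ι 1) = (f ^ n) • a' := by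
      intro n
      rcases hdich (n + n₀) with ⟨a', ha'⟩ | ⟨a', ha'⟩
      · exfalso
        apply hn₀ ((f ^ n) • a')
        rw [ha', add_comm n n₀, pow_add, mul_smul]
      · exact ⟨(f ^ n₀) • a', by rw [he'app, ha', pow_add, mul_smul]⟩
    exact aux_main R f hfu A ι g hι hg hexact hP1' hP2' hP3' hfinjS' hStf'
      e' he' heB' hdiv'
end
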